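/- Let A be a unital alternative *-algebra over ℂ containing a nontrivial symmetric idempotent e satisfying conditions (♠) and (♣), and let Φ : A → A be a map satisfying the *-Jordan n-derivation identity in the last two slots. Then for all i ≠ j in {1,2} and all a_{ij}, b_{ij} ∈ A_{ij} one has Φ(a_{ij} + b_{ij}) = Φ(a_{ij}) + Φ(b_{ij}). -/

import Mathlib

/-- The Jordan `•`-product `a • b = ab + b a*`. -/
def starJordan {A : Type*} [NonAssocRing A] [StarRing A] (a b : A) : A :=
  a * b + b * star a

/-- Left-normed iterated Jordan `•`-product of a list (empty list ↦ 0, junk value). -/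
def leftStarJordan {A : Type*} [NonAssocRing A] [StarRing A] : List A → A
  | [] => 0
  | x :: xs => xs.foldl starJordan x

/-- The family `a₁ = ⋯ = a_{n-2} = 1`, `a_{n-1} = x`, `a_n = y`. -/
def lastTwoFamily {A : Type*} [One A] (n : ℕ) (x y : A) : Fin n → A :=
  fun i => if (i : ℕ) = n - 2 then x else if (i : ℕ) = n - 1 then y else 1

/-- `e₁ = e`, `e₂ = 1 - e`. -/
def peirceIdem {A : Type*} [NonAssocRing A] (e : A) : Fin 2 → A :=
  fun i => if i = 0 then e else 1 - e

/-- Membership in the Peirce component `A_{ij}`: `eᵢ x = x` and `x eⱼ = x`. -/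
def inPeirce {A : Type*} [NonAssocRing A] (e : A) (i j : Fin 2) (x : A) : Prop :=
  peirceIdem e i * x = x ∧ x * peirceIdem e j = x

/-- The inner derivation `Ξ_{y,z}(a) = y(za) − z(ya) + y(az) − (ya)z + (az)y − (ay)z`. -/
def innerDer {A : Type*} [NonAssocRing A] (y z a : A) : A :=
  y * (z * a) - z * (y * a) + y * (a * z) - (y * a) * z + (a * z) * y - (a * y) * z

set_option linter.unusedSectionVars false
set_option linter.unusedVariables false
set_option maxHeartbeats 1600000

/- ### Auxiliary scalar lemmas -/
section Scalars
variable {A : Type*} [NonAssocRing A] [Module ℂ A]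

lemma aux_csmul_cancel (c : ℂ) (hc : c ≠ 0) {x : A} (h : c • x = 0) : x = 0 := by
  have := congrArg (fun w => c⁻¹ • w) h
  simpa [smul_smul, inv_mul_cancel₀ hc] using this

lemma aux_twice {x : A} (h : x + x = 0) : x = 0 := by
  have h2 : (2:ℂ) • x = 0 := by rw [two_smul]; exact h
  exact aux_csmul_cancel 2 two_ne_zero h2

lemma aux_nsmul_cancel {M : ℕ} (hM : 0 < M) {x y : A} (h : M • x = M • y) : x = y := by
  have h' : (M:ℂ) • (x - y) = 0 := by
    rw [smul_sub, Nat.cast_smul_eq_nsmul, Nat.cast_smul_eq_nsmul, h, sub_self]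
  have := aux_csmul_cancel (M:ℂ) (by exact_mod_cast hM.ne') h'
  rwa [sub_eq_zero] at this

end Scalars

/- ### Associator calculus and alternative Peirce rules -/
section Assoc
variable {A : Type*} [NonAssocRing A] [Module ℂ A]

/-- associator -/
def As (x y z : A) : A := x*y*z - x*(y*z)

variable (h1 : ∀ a b : A, a * a * b = a * (a * b)) (h2 : ∀ a b : A, b * a * a = b * (a * a))
include h1 h2

lemma As_swap12 (x y z : A) : As x y z = - As y x z := by
  have e1 := h1 (x+y) z
  have e2 := h1 x z
  have e3 := h1 y z
  simp only [add_mul, mul_add] at e1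
  simp only [As]
  linear_combination (norm := abel) e1 - e2 - e3

lemma As_swap23 (x y z : A) : As x y z = - As x z y := by
  have e1 := h2 (y+z) x
  have e2 := h2 y x
  have e3 := h2 z x
  simp only [add_mul, mul_add] at e1
  simp only [As]
  linear_combination (norm := abel) e1 - e2 - e3

lemma eMulA (e u v : A) : e*(u*v) = (e*u)*v + As u e v := by
  have h := As_swap12 h1 h2 e u v
  simp only [As] at h ⊢
  linear_combination (norm := abel) -h

lemma mulEA (u v e : A) : (u*v)*e = u*(v*e) - As u e v := by
  have h := As_swap23 h1 h2 u v e
  simp only [As] at h ⊢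
  linear_combination (norm := abel) h

lemma rule_11_11 (e : A) (he : e*e = e) {u v : A} (hu1 : e*u = u) (hu2 : u*e = u)
    (hv1 : e*v = v) (hv2 : v*e = v) : e*(u*v) = u*v ∧ (u*v)*e = u*v := by
  have hα : As u e v = 0 := by simp [As, hu2, hv1]
  exact ⟨by rw [eMulA h1 h2, hα, add_zero, hu1], by rw [mulEA h1 h2, hα, sub_zero, hv2]⟩

lemma rule_11_12 (e : A) (he : e*e = e) {u v : A} (hu1 : e*u = u) (hu2 : u*e = u)
    (hv1 : e*v = v) (hv2 : v*e = 0) : e*(u*v) = u*v ∧ (u*v)*e = 0 := by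
  have hα : As u e v = 0 := by simp [As, hu2, hv1]
  exact ⟨by rw [eMulA h1 h2, hα, add_zero, hu1], by rw [mulEA h1 h2, hα, sub_zero, hv2, mul_zero]⟩

lemma rule_11_21 (e : A) (he : e*e = e) {u v : A} (hu1 : e*u = u) (hu2 : u*e = u)
    (hv1 : e*v = 0) (hv2 : v*e = v) : u*v = 0 := by
  have hα : As u e v = u*v := by simp [As, hu2, hv1]
  have he1 : e*(u*v) = u*v + u*v := by rw [eMulA h1 h2, hα, hu1]
  have he2 : e*(e*(u*v)) = e*(u*v) := by rw [← h1 e (u*v), he]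
  rw [he1, mul_add, he1] at he2
  apply aux_twice
  linear_combination (norm := abel) he2

lemma rule_11_22 (e : A) (he : e*e = e) {u v : A} (hu1 : e*u = u) (hu2 : u*e = u)
    (hv1 : e*v = 0) (hv2 : v*e = 0) : u*v = 0 := by
  have hα : As u e v = u*v := by simp [As, hu2, hv1]
  have he1 : (u*v)*e = -(u*v) := by rw [mulEA h1 h2, hα, hv2, mul_zero, zero_sub]
  have he2 : ((u*v)*e)*e = (u*v)*e := by rw [h2 e (u*v), he]
  rw [he1, neg_mul, he1, neg_neg] at he2
  apply aux_twice
  linear_combination (norm := abel) he2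

lemma rule_12_11 (e : A) (he : e*e = e) {u v : A} (hu1 : e*u = u) (hu2 : u*e = 0)
    (hv1 : e*v = v) (hv2 : v*e = v) : u*v = 0 := by
  have hα : As u e v = -(u*v) := by simp [As, hu2, hv1]
  have he1 : (u*v)*e = u*v + u*v := by
    rw [mulEA h1 h2, hα, hv2, sub_neg_eq_add]
  have he2 : ((u*v)*e)*e = (u*v)*e := by rw [h2 e (u*v), he]
  rw [he1, add_mul, he1] at he2
  apply aux_twice
  linear_combination (norm := abel) he2

lemma rule_12_12 (e : A) (he : e*e = e) {u v : A} (hu1 : e*u = u) (hu2 : u*e = 0)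
    (hv1 : e*v = v) (hv2 : v*e = 0) : e*(u*v) = 0 ∧ (u*v)*e = u*v := by
  have hα : As u e v = -(u*v) := by simp [As, hu2, hv1]
  constructor
  · rw [eMulA h1 h2, hα, hu1, add_neg_cancel]
  · rw [mulEA h1 h2, hα, hv2, mul_zero, sub_neg_eq_add, zero_add]

lemma rule_12_21 (e : A) (he : e*e = e) {u v : A} (hu1 : e*u = u) (hu2 : u*e = 0)
    (hv1 : e*v = 0) (hv2 : v*e = v) : e*(u*v) = u*v ∧ (u*v)*e = u*v := by
  have hα : As u e v = 0 := by simp [As, hu2, hv1]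
  exact ⟨by rw [eMulA h1 h2, hα, add_zero, hu1], by rw [mulEA h1 h2, hα, sub_zero, hv2]⟩

lemma rule_12_22 (e : A) (he : e*e = e) {u v : A} (hu1 : e*u = u) (hu2 : u*e = 0)
    (hv1 : e*v = 0) (hv2 : v*e = 0) : e*(u*v) = u*v ∧ (u*v)*e = 0 := by
  have hα : As u e v = 0 := by simp [As, hu2, hv1]
  exact ⟨by rw [eMulA h1 h2, hα, add_zero, hu1], by rw [mulEA h1 h2, hα, sub_zero, hv2, mul_zero]⟩

lemma d_ee (e : A) (he : e*e = e) (t : A) : e*(e*t) = e*t := by rw [← h1 e t, he]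
lemma d_tee (e : A) (he : e*e = e) (t : A) : (t*e)*e = t*e := by rw [h2 e t, he]
lemma d_flex (e t : A) : e*(t*e) = (e*t)*e := by
  have hs : As e t e = - As t e e := As_swap12 h1 h2 e t e
  have h0 : As t e e = 0 := by simp [As, h2]
  rw [h0, neg_zero, As, sub_eq_zero] at hs
  exact hs.symm
lemma d_e11e (e : A) (he : e*e = e) (t : A) : e*((e*t)*e) = (e*t)*e := by
  rw [← d_flex h1 h2 e t, d_ee h1 h2 e he, d_flex h1 h2 e t]
lemma d_11ee (e : A) (he : e*e = e) (t : A) : ((e*t)*e)*e = (e*t)*e := d_tee h1 h2 e he (e*t)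

/-- all Peirce-component type facts for the canonical decomposition of `t` -/
lemma comps (e : A) (he : e*e = e) (t : A) :
    (e*((e*t)*e) = (e*t)*e) ∧ (((e*t)*e)*e = (e*t)*e) ∧
    (e*(e*t - (e*t)*e) = e*t - (e*t)*e) ∧ ((e*t - (e*t)*e)*e = 0) ∧
    (e*(t*e - (e*t)*e) = 0) ∧ ((t*e - (e*t)*e)*e = t*e - (e*t)*e) ∧
    (e*(t - e*t - t*e + (e*t)*e) = 0) ∧ ((t - e*t - t*e + (e*t)*e)*e = 0) := by
  have hee := d_ee h1 h2 e he t
  have htee := d_tee h1 h2 e he t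
  have hflex := d_flex h1 h2 e t
  have h4 := d_e11e h1 h2 e he t
  have h5 := d_11ee h1 h2 e he t
  refine ⟨h4, h5, ?_, ?_, ?_, ?_, ?_, ?_⟩
  · rw [mul_sub, hee, h4]
  · rw [sub_mul, h5, sub_self]
  · rw [mul_sub, hflex, h4, sub_self]
  · rw [sub_mul, htee, h5]
  · rw [mul_add, mul_sub, mul_sub, hee, hflex, h4]; abel
  · rw [add_mul, sub_mul, sub_mul, htee, h5]; abel

end Assoc

/- ### Jordan product and list lemmas -/
section KEY
variable {A : Type*} [NonAssocRing A] [StarRing A]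

lemma sj_add_right (x y y' : A) : starJordan x (y + y') = starJordan x y + starJordan x y' := by
  simp only [starJordan, mul_add, add_mul]; abel

lemma sj_add_left (x x' y : A) : starJordan (x+x') y = starJordan x y + starJordan x' y := by
  simp only [starJordan, add_mul, mul_add, star_add]; abel

lemma sj_zero_right (x : A) : starJordan x 0 = 0 := by simp [starJordan]
lemma sj_zero_left (y : A) : starJordan 0 y = 0 := by simp [starJordan]

lemma pm_right (k : ℕ) (x y : A) : (k•x)*y = k•(x*y) :=
  map_nsmul (AddMonoidHom.mulRight y) k x
lemma pm_left (k : ℕ) (x y : A) : x*(k•y) = k•(x*y) :=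
  map_nsmul (AddMonoidHom.mulLeft x) k y
lemma pm_star (k : ℕ) (x : A) : star (k•x) = k • star x :=
  map_nsmul (starAddEquiv : A ≃+ A) k x

lemma sj_nsmul_left (k : ℕ) (x y : A) : starJordan (k•x) y = k • starJordan x y := by
  rw [starJordan, starJordan, pm_right, pm_star, pm_left, smul_add]

lemma sj_nsmul_right (k : ℕ) (x y : A) : starJordan x (k•y) = k • starJordan x y := by
  rw [starJordan, starJordan, pm_left, pm_right, smul_add]

lemma sj_nsmul_one (k : ℕ) (x : A) : starJordan ((k:ℕ)•(1:A)) x = (k+k) • x := by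
  rw [starJordan, pm_right, pm_star, star_one, pm_left, one_mul, mul_one, add_nsmul]

lemma foldl_replicate (k : ℕ) (z : A) (hz : star z = z) :
    List.foldl starJordan z (List.replicate k 1) = (2^k : ℕ) • z := by
  induction k generalizing z with
  | zero => simp
  | succ k ih =>
    rw [List.replicate_succ, List.foldl_cons]
    have h1 : starJordan z 1 = z + z := by simp [starJordan, hz]
    have hz' : star (starJordan z 1) = starJordan z 1 := by rw [h1, star_add, hz]
    rw [ih _ hz', h1, smul_add, ← add_nsmul]
    congr 1
    rw [pow_succ, mul_two]

lemma lsj_append (l : List A) (hl : l ≠ []) (x y : A) :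
    leftStarJordan (l ++ [x,y]) = starJordan (starJordan (leftStarJordan l) x) y := by
  match l with
  | [] => exact absurd rfl hl
  | c :: cs =>
    show leftStarJordan (c :: (cs ++ [x,y])) = _
    simp [leftStarJordan, List.foldl_append]

lemma lsj_rep (m : ℕ) (x y : A) :
    leftStarJordan (List.replicate m 1 ++ [x,y]) = (2^m : ℕ) • starJordan x y := by
  cases m with
  | zero => simp [leftStarJordan]
  | succ k =>
    rw [List.replicate_succ]
    show leftStarJordan (1 :: (List.replicate k 1 ++ [x,y])) = _
    show List.foldl starJordan 1 (List.replicate k 1 ++ [x,y]) = _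
    rw [List.foldl_append, foldl_replicate k 1 (star_one A)]
    show starJordan (starJordan ((2^k:ℕ) • (1:A)) x) y = _
    rw [sj_nsmul_one, sj_nsmul_left]
    congr 1
    rw [pow_succ, mul_two]

-- ofFn splitting
lemma ofFn_add_castAdd {α : Type*} {n m : ℕ} {f : Fin (n + m) → α} :
    List.ofFn f = (List.ofFn fun i => f (Fin.castAdd m i)) ++ (List.ofFn fun i => f (Fin.natAdd n i)) :=
  List.ofFn_add

lemma ofFn_fam (m : ℕ) (x y : A) :
    List.ofFn (lastTwoFamily (m+2) x y) = List.replicate m 1 ++ [x,y] := by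
  rw [ofFn_add_castAdd (m := 2)]
  congr 1
  · rw [show (fun i => lastTwoFamily (m+2) x y (Fin.castAdd 2 i)) = (fun _ : Fin m => (1:A)) from ?_,
      List.ofFn_const]
    funext i
    simp only [lastTwoFamily, Fin.coe_castAdd]
    have h1 : (i:ℕ) ≠ m + 2 - 2 := by omega
    have h2 : (i:ℕ) ≠ m + 2 - 1 := by omega
    rw [if_neg h1, if_neg h2]
  · show [lastTwoFamily (m+2) x y (Fin.natAdd m 0), lastTwoFamily (m+2) x y (Fin.natAdd m 1)] = [x, y]
    simp only [lastTwoFamily, Fin.coe_natAdd]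
    norm_num
end KEY

section KEY2
variable {A : Type*} [NonAssocRing A] [StarRing A]

lemma ofFn_upd_lt (m : ℕ) (x y : A) (v : A) (k : Fin (m+2)) (hk : (k:ℕ) < m) :
    List.ofFn (Function.update (lastTwoFamily (m+2) x y) k v)
      = List.ofFn (fun i : Fin m => if (i:ℕ) = (k:ℕ) then v else 1) ++ [x,y] := by
  rw [ofFn_add_castAdd (m := 2)]
  congr 1
  · apply congrArg List.ofFn
    funext i
    rw [Function.update_apply]
    by_cases h : (i:ℕ) = (k:ℕ)
    · rw [if_pos (by apply Fin.ext; simpa using h), if_pos h]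
    · rw [if_neg (by simp [Fin.ext_iff]; omega), if_neg h]
      simp only [lastTwoFamily, Fin.coe_castAdd]
      rw [if_neg (by omega), if_neg (by omega)]
  · show [_, _] = [x, y]
    simp only [Function.update_apply]
    rw [if_neg (by simp [Fin.ext_iff]; omega), if_neg (by simp [Fin.ext_iff]; omega)]
    simp only [lastTwoFamily, Fin.coe_natAdd]
    norm_num

lemma ofFn_upd_mid (m : ℕ) (x y : A) (v : A) (k : Fin (m+2)) (hk : (k:ℕ) = m) :
    List.ofFn (Function.update (lastTwoFamily (m+2) x y) k v)
      = List.replicate m 1 ++ [v, y] := by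
  rw [ofFn_add_castAdd (m := 2)]
  congr 1
  · rw [show (fun i => Function.update (lastTwoFamily (m+2) x y) k v (Fin.castAdd 2 i))
        = (fun _ : Fin m => (1:A)) from ?_, List.ofFn_const]
    funext i
    rw [Function.update_apply, if_neg (by simp [Fin.ext_iff]; omega)]
    simp only [lastTwoFamily, Fin.coe_castAdd]
    rw [if_neg (by omega), if_neg (by omega)]
  · show [_, _] = [v, y]
    simp only [Function.update_apply]
    rw [if_pos (by simp [Fin.ext_iff]; omega), if_neg (by simp [Fin.ext_iff]; omega)]
    simp only [lastTwoFamily, Fin.coe_natAdd]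
    norm_num

lemma ofFn_upd_last (m : ℕ) (x y : A) (v : A) (k : Fin (m+2)) (hk : (k:ℕ) = m+1) :
    List.ofFn (Function.update (lastTwoFamily (m+2) x y) k v)
      = List.replicate m 1 ++ [x, v] := by
  rw [ofFn_add_castAdd (m := 2)]
  congr 1
  · rw [show (fun i => Function.update (lastTwoFamily (m+2) x y) k v (Fin.castAdd 2 i))
        = (fun _ : Fin m => (1:A)) from ?_, List.ofFn_const]
    funext i
    rw [Function.update_apply, if_neg (by simp [Fin.ext_iff]; omega)]
    simp only [lastTwoFamily, Fin.coe_castAdd]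
    rw [if_neg (by omega), if_neg (by omega)]
  · show [_, _] = [x, v]
    simp only [Function.update_apply]
    rw [if_neg (by simp [Fin.ext_iff]; omega), if_pos (by simp [Fin.ext_iff]; omega)]
    simp only [lastTwoFamily, Fin.coe_natAdd]
    norm_num

lemma fam_eval_lt (m : ℕ) (x y : A) (k : Fin (m+2)) (hk : (k:ℕ) < m) :
    lastTwoFamily (m+2) x y k = 1 := by
  simp only [lastTwoFamily]; rw [if_neg (by omega), if_neg (by omega)]

lemma fam_eval_mid (m : ℕ) (x y : A) (k : Fin (m+2)) (hk : (k:ℕ) = m) :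
    lastTwoFamily (m+2) x y k = x := by
  simp only [lastTwoFamily]; rw [if_pos (by omega)]

lemma fam_eval_last (m : ℕ) (x y : A) (k : Fin (m+2)) (hk : (k:ℕ) = m+1) :
    lastTwoFamily (m+2) x y k = y := by
  simp only [lastTwoFamily]; rw [if_neg (by omega), if_pos (by omega)]

lemma key_formula (m : ℕ) (Φ : A → A)
    (hΦ : ∀ x y : A,
      Φ (leftStarJordan (List.ofFn (lastTwoFamily (m+2) x y))) =
        ∑ k : Fin (m+2), leftStarJordan (List.ofFn
          (Function.update (lastTwoFamily (m+2) x y) k (Φ (lastTwoFamily (m+2) x y k)))))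
    (x y : A) :
    Φ ((2^m : ℕ) • starJordan x y) =
      (∑ j : Fin m, starJordan (starJordan
          (leftStarJordan (List.ofFn (fun i : Fin m => if (i:ℕ) = (j:ℕ) then Φ 1 else 1))) x) y)
        + (2^m : ℕ) • starJordan (Φ x) y + (2^m : ℕ) • starJordan x (Φ y) := by
  have h := hΦ x y
  rw [ofFn_fam, lsj_rep] at h
  rw [h, Fin.sum_univ_castSucc, Fin.sum_univ_castSucc]
  congr 1
  · congr 1
    · apply Finset.sum_congr rfl
      intro j _
      have hkv : ((j.castSucc.castSucc : Fin (m+2)) : ℕ) = (j:ℕ) := by simp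
      have hjm := j.isLt
      rw [fam_eval_lt m x y _ (by omega), ofFn_upd_lt m x y (Φ 1) _ (by omega)]
      rw [lsj_append _ (by
        intro hnil
        have hl := congrArg List.length hnil
        simp at hl
        omega) x y]
      simp only [hkv]
    · have hkv : (((Fin.last m).castSucc : Fin (m+2)) : ℕ) = m := by simp
      rw [fam_eval_mid m x y _ hkv, ofFn_upd_mid m x y (Φ x) _ hkv, lsj_rep]
  · have hkv : ((Fin.last (m+1) : Fin (m+2)) : ℕ) = m+1 := by simp
    rw [fam_eval_last m x y _ hkv, ofFn_upd_last m x y (Φ y) _ hkv, lsj_rep]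

end KEY2

/- ### Derived binary identities -/
section Tools
variable {A : Type*} [NonAssocRing A] [Module ℂ A] [StarRing A]

lemma tool0_of_key (Φ : A → A) (m : ℕ) (P : Fin m → A)
    (key : ∀ x y : A, Φ ((2^m:ℕ) • starJordan x y) =
      (∑ j : Fin m, starJordan (starJordan (P j) x) y)
        + (2^m:ℕ) • starJordan (Φ x) y + (2^m:ℕ) • starJordan x (Φ y)) :
    Φ 0 = 0 := by
  have h := key 0 0
  simpa [sj_zero_right, sj_zero_left] using h

lemma toolA_of_key (Φ : A → A) (m : ℕ) (P : Fin m → A)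
    (key : ∀ x y : A, Φ ((2^m:ℕ) • starJordan x y) =
      (∑ j : Fin m, starJordan (starJordan (P j) x) y)
        + (2^m:ℕ) • starJordan (Φ x) y + (2^m:ℕ) • starJordan x (Φ y)) :
    ∀ x y y' : A,
      Φ ((2^m:ℕ) • starJordan x y + (2^m:ℕ) • starJordan x y') =
        Φ ((2^m:ℕ) • starJordan x y) + Φ ((2^m:ℕ) • starJordan x y')
          + (2^m:ℕ) • starJordan x (Φ (y+y') - Φ y - Φ y') := by
  intro x y y'
  have k1 := key x (y+y')
  have k2 := key x y
  have k3 := key x y'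
  simp only [sj_add_right, smul_add] at k1
  rw [Finset.sum_add_distrib] at k1
  have hexp : starJordan x (Φ (y+y') - Φ y - Φ y') =
      starJordan x (Φ (y+y')) - starJordan x (Φ y) - starJordan x (Φ y') := by
    simp only [starJordan, mul_sub, sub_mul]; abel
  rw [hexp, smul_sub, smul_sub]
  linear_combination (norm := abel) k1 - k2 - k3

lemma toolB_of_key (Φ : A → A) (m : ℕ) (P : Fin m → A)
    (key : ∀ x y : A, Φ ((2^m:ℕ) • starJordan x y) =
      (∑ j : Fin m, starJordan (starJordan (P j) x) y)
        + (2^m:ℕ) • starJordan (Φ x) y + (2^m:ℕ) • starJordan x (Φ y)) :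
    ∀ x x' y : A,
      Φ ((2^m:ℕ) • starJordan x y + (2^m:ℕ) • starJordan x' y) =
        Φ ((2^m:ℕ) • starJordan x y) + Φ ((2^m:ℕ) • starJordan x' y)
          + (2^m:ℕ) • starJordan (Φ (x+x') - Φ x - Φ x') y := by
  intro x x' y
  have k1 := key (x+x') y
  have k2 := key x y
  have k3 := key x' y
  simp only [sj_add_right, sj_add_left, smul_add] at k1
  rw [Finset.sum_add_distrib] at k1
  have hexp : starJordan (Φ (x+x') - Φ x - Φ x') y =
      starJordan (Φ (x+x')) y - starJordan (Φ x) y - starJordan (Φ x') y := by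
    simp only [starJordan, mul_sub, sub_mul, star_sub]; abel
  rw [hexp, smul_sub, smul_sub]
  linear_combination (norm := abel) k1 - k2 - k3

lemma vanishB (Φ : A → A) (M : ℕ) (hM : 0 < M) (tool0 : Φ 0 = 0)
    (toolB : ∀ x x' y : A,
      Φ (M • starJordan x y + M • starJordan x' y) =
        Φ (M • starJordan x y) + Φ (M • starJordan x' y)
          + M • starJordan (Φ (x+x') - Φ x - Φ x') y)
    (x x' y : A) (h0 : starJordan x' y = 0) :
    starJordan (Φ (x+x') - Φ x - Φ x') y = 0 := by
  have hB := toolB x x' y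
  simp only [h0, smul_zero, add_zero, tool0] at hB
  have h5 : M • starJordan (Φ (x+x') - Φ x - Φ x') y = M • (0:A) := by
    rw [smul_zero]
    linear_combination (norm := abel) -hB
  exact aux_nsmul_cancel hM h5

end Tools

/- ### Killing the 21-component -/
section Kill
variable {A : Type*} [NonAssocRing A] [Module ℂ A] [SMulCommClass ℂ A A]
  [IsScalarTower ℂ A A] [StarRing A]
variable (h1 : ∀ a b : A, a * a * b = a * (a * b)) (h2 : ∀ a b : A, b * a * a = b * (a * a))
include h1 h2

lemma kill21 (e : A) (he : e*e = e)
    (hsp : ∀ x : A, (∀ r : A, x*r*e = 0) → x = 0)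
    (W : A) (hW1 : e*W = 0) (hW2 : W*e = W)
    (hWr : ∀ r : A, e*r = r → r*e = r → W*r = 0) : W = 0 := by
  have hf : (1-e)*(1-e) = 1-e := by
    rw [mul_sub, mul_one, sub_mul, one_mul, he]; abel
  have hfW1 : (1-e)*W = W := by rw [sub_mul, one_mul, hW1, sub_zero]
  have hfW2 : W*(1-e) = 0 := by rw [mul_sub, mul_one, hW2, sub_self]
  apply hsp
  intro r
  obtain ⟨c1a, c1b, c2a, c2b, c3a, c3b, c4a, c4b⟩ := comps h1 h2 e he r
  have pA : W*((e*r)*e) = 0 := hWr _ c1a c1b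
  have pB : (W*(e*r - (e*r)*e))*e = 0 := by
    -- W ∈ A₁₂(f), (e*r - (e*r)*e) ∈ A₂₁(f); product in A₁₁(f) = A₂₂(e)
    have hv1 : (1-e)*(e*r - (e*r)*e) = 0 := by rw [sub_mul, one_mul, c2a, sub_self]
    have hv2 : (e*r - (e*r)*e)*(1-e) = e*r - (e*r)*e := by
      rw [mul_sub, mul_one, c2b, sub_zero]
    have hq := (rule_12_21 h1 h2 (1-e) hf hfW1 hfW2 hv1 hv2).2
    -- hq : (W*t12)*(1-e) = W*t12
    rw [mul_sub, mul_one] at hq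
    linear_combination (norm := abel) -hq
  have pC : (W*(r*e - (e*r)*e))*e = 0 := by
    have hv1 : (1-e)*(r*e - (e*r)*e) = r*e - (e*r)*e := by
      rw [sub_mul, one_mul, c3a, sub_zero]
    have hv2 : (r*e - (e*r)*e)*(1-e) = 0 := by rw [mul_sub, mul_one, c3b, sub_self]
    have hq := (rule_12_12 h1 h2 (1-e) hf hfW1 hfW2 hv1 hv2).2
    rw [mul_sub, mul_one] at hq
    linear_combination (norm := abel) -hq
  have pD : W*(r - e*r - r*e + (e*r)*e) = 0 := by
    have hv1 : (1-e)*(r - e*r - r*e + (e*r)*e) = r - e*r - r*e + (e*r)*e := by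
      rw [sub_mul, one_mul, c4a, sub_zero]
    have hv2 : (r - e*r - r*e + (e*r)*e)*(1-e) = r - e*r - r*e + (e*r)*e := by
      rw [mul_sub, mul_one, c4b, sub_zero]
    exact rule_12_11 h1 h2 (1-e) hf hfW1 hfW2 hv1 hv2
  have hsplit : W*r*e = (W*((e*r)*e))*e + (W*(e*r - (e*r)*e))*e
      + (W*(r*e - (e*r)*e))*e + (W*(r - e*r - r*e + (e*r)*e))*e := by
    rw [← add_mul, ← add_mul, ← add_mul, ← mul_add, ← mul_add, ← mul_add]
    congr 2
    abel
  rw [hsplit, pA, pD, zero_mul, pB, pC]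
  simp

lemma C1 (Φ : A → A) (M : ℕ) (hM : 0 < M) (tool0 : Φ 0 = 0)
    (toolB : ∀ x x' y : A,
      Φ (M • starJordan x y + M • starJordan x' y) =
        Φ (M • starJordan x y) + Φ (M • starJordan x' y)
          + M • starJordan (Φ (x+x') - Φ x - Φ x') y)
    (e : A) (he : e*e = e) (hse : star e = e)
    (hsp : ∀ x : A, (∀ r : A, x*r*e = 0) → x = 0)
    (x u : A) (hu1 : e*u = u) (hu2 : u*e = 0) :
    (Φ (x+u) - Φ x - Φ u)*e - (e*(Φ (x+u) - Φ x - Φ u))*e = 0 := by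
  have hsu1 : star u * e = star u := by rw [← hse, ← star_mul, hu1]
  have hsu2 : e * star u = 0 := by rw [← hse, ← star_mul, hu2, star_zero]
  have hf : (1-e)*(1-e) = 1-e := by
    rw [mul_sub, mul_one, sub_mul, one_mul, he]; abel
  obtain ⟨K, hKdef⟩ : ∃ K, Φ (x+u) - Φ x - Φ u = K := ⟨_, rfl⟩
  rw [hKdef]
  have hvan : ∀ r : A, e*r = r → r*e = r → starJordan K r = 0 := by
    intro r hr1 hr2
    rw [← hKdef]
    apply vanishB Φ M hM tool0 toolB x u r
    rw [starJordan, rule_12_11 h1 h2 e he hu1 hu2 hr1 hr2,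
      rule_11_21 h1 h2 e he hr1 hr2 hsu2 hsu1, add_zero]
  obtain ⟨k1a, k1b, k2a, k2b, k3a, k3b, k4a, k4b⟩ := comps h1 h2 e he K
  obtain ⟨l1a, l1b, l2a, l2b, l3a, l3b, l4a, l4b⟩ := comps h1 h2 e he (star K)
  have hK21r : ∀ r : A, e*r = r → r*e = r → (K*e - (e*K)*e)*r = 0 := by
    intro r hr1 hr2
    have hE : K*r + r*(star K) = 0 := by
      have h3 := hvan r hr1 hr2
      rwa [starJordan] at h3
    have p1 : (e*K - (e*K)*e)*r = 0 := rule_12_11 h1 h2 e he k2a k2b hr1 hr2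
    have p2 : (K - e*K - K*e + (e*K)*e)*r = 0 := by
      apply rule_11_22 h1 h2 (1-e) hf
      · rw [sub_mul, one_mul, k4a, sub_zero]
      · rw [mul_sub, mul_one, k4b, sub_zero]
      · rw [sub_mul, one_mul, hr1, sub_self]
      · rw [mul_sub, mul_one, hr2, sub_self]
    have p3 : r*((star K)*e - (e*(star K))*e) = 0 :=
      rule_11_21 h1 h2 e he hr1 hr2 l3a l3b
    have p4 : r*(star K - e*(star K) - (star K)*e + (e*(star K))*e) = 0 :=
      rule_11_22 h1 h2 e he hr1 hr2 l4a l4b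
    have hsplitK : K*r = ((e*K)*e)*r + (e*K - (e*K)*e)*r + (K*e - (e*K)*e)*r
        + (K - e*K - K*e + (e*K)*e)*r := by
      rw [← add_mul, ← add_mul, ← add_mul]
      congr 1
      abel
    have hsplitL : r*(star K) = r*((e*(star K))*e) + r*(e*(star K) - (e*(star K))*e)
        + r*((star K)*e - (e*(star K))*e)
        + r*(star K - e*(star K) - (star K)*e + (e*(star K))*e) := by
      rw [← mul_add, ← mul_add, ← mul_add]
      congr 1
      abel
    rw [hsplitK, hsplitL, p1, p2, p3, p4, add_zero, add_zero, add_zero] at hE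
    -- hE : ((e*K)*e)*r + 0 + (K*e - (e*K)*e)*r + (r*((e*(star K))*e) + r*(e*(star K) - (e*(star K))*e)) = 0
    have hE2 := congrArg (fun w => e*w) hE
    simp only [mul_add, mul_zero] at hE2
    rw [(rule_11_11 h1 h2 e he k1a k1b hr1 hr2).1,
      (rule_11_11 h1 h2 e he hr1 hr2 l1a l1b).1,
      (rule_11_12 h1 h2 e he hr1 hr2 l2a l2b).1] at hE2
    have q2 : e*((K*e - (e*K)*e)*r) = 0 := by
      have hv1 : (1-e)*(K*e - (e*K)*e) = K*e - (e*K)*e := by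
        rw [sub_mul, one_mul, k3a, sub_zero]
      have hv2 : (K*e - (e*K)*e)*(1-e) = 0 := by rw [mul_sub, mul_one, k3b, sub_self]
      have hr1' : (1-e)*r = 0 := by rw [sub_mul, one_mul, hr1, sub_self]
      have hr2' : r*(1-e) = 0 := by rw [mul_sub, mul_one, hr2, sub_self]
      have hq := (rule_12_22 h1 h2 (1-e) hf hv1 hv2 hr1' hr2').1
      rw [sub_mul, one_mul] at hq
      linear_combination (norm := abel) -hq
    rw [q2] at hE2
    linear_combination (norm := abel) hE - hE2
  exact kill21 h1 h2 e he hsp (K*e - (e*K)*e) k3a k3b hK21r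

end Kill

/- ### The main additivity lemma for an off-diagonal pair -/
section Pair
variable {A : Type*} [NonAssocRing A] [Module ℂ A] [SMulCommClass ℂ A A]
  [IsScalarTower ℂ A A] [StarRing A]

lemma pair_add
    (h1 : ∀ a b : A, a * a * b = a * (a * b)) (h2 : ∀ a b : A, b * a * a = b * (a * a))
    (Φ : A → A) (M : ℕ) (hM : 0 < M) (tool0 : Φ 0 = 0)
    (toolA : ∀ x y y' : A,
      Φ (M • starJordan x y + M • starJordan x y') =
        Φ (M • starJordan x y) + Φ (M • starJordan x y')
          + M • starJordan x (Φ (y+y') - Φ y - Φ y'))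
    (toolB : ∀ x x' y : A,
      Φ (M • starJordan x y + M • starJordan x' y) =
        Φ (M • starJordan x y) + Φ (M • starJordan x' y)
          + M • starJordan (Φ (x+x') - Φ x - Φ x') y)
    (e : A) (he : e*e = e) (hse : star e = e)
    (hsp : ∀ x : A, (∀ r : A, x*r*e = 0) → x = 0)
    (hcl : ∀ x : A, (∀ r : A, x*r*(1-e) = 0) → x = 0)
    (a b : A) (hea : e*a = a) (hae : a*e = 0) (heb : e*b = b) (hbe : b*e = 0) :
    Φ (a + b) = Φ a + Φ b := by
  have hf : (1-e)*(1-e) = 1-e := by rw [mul_sub, mul_one, sub_mul, one_mul, he]; abel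
  have hsf : star (1-e) = 1-e := by rw [star_sub, star_one, hse]
  have hsb1 : star b * e = star b := by rw [← hse, ← star_mul, heb]
  have hesb : e * star b = 0 := by rw [← hse, ← star_mul, hbe, star_zero]
  -- the scaled pair
  have hMc : (M:ℂ) ≠ 0 := by exact_mod_cast hM.ne'
  obtain ⟨a', ha'⟩ : ∃ a' : A, ((M:ℂ))⁻¹ • a = a' := ⟨_, rfl⟩
  obtain ⟨b', hb'⟩ : ∃ b' : A, ((M:ℂ))⁻¹ • b = b' := ⟨_, rfl⟩
  have hMa' : M • a' = a := by
    rw [← ha', ← Nat.cast_smul_eq_nsmul ℂ M, smul_smul, mul_inv_cancel₀ hMc, one_smul]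
  have hMb' : M • b' = b := by
    rw [← hb', ← Nat.cast_smul_eq_nsmul ℂ M, smul_smul, mul_inv_cancel₀ hMc, one_smul]
  have hea' : e*a' = a' := by rw [← ha', mul_smul_comm, hea]
  have ha'e : a'*e = 0 := by rw [← ha', smul_mul_assoc, hae, smul_zero]
  have heb' : e*b' = b' := by rw [← hb', mul_smul_comm, heb]
  have hb'e : b'*e = 0 := by rw [← hb', smul_mul_assoc, hbe, smul_zero]
  have hsja' : starJordan e a' = a' := by rw [starJordan, hse, hea', ha'e, add_zero]
  have hsjb' : starJordan e b' = b' := by rw [starJordan, hse, heb', hb'e, add_zero]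
  have hsjfa' : starJordan (1-e) a' = a' := by
    rw [starJordan, hsf, sub_mul, one_mul, hea', sub_self, mul_sub, mul_one, ha'e,
      sub_zero, zero_add]
  have hsjfb' : starJordan (1-e) b' = b' := by
    rw [starJordan, hsf, sub_mul, one_mul, heb', sub_self, mul_sub, mul_one, hb'e,
      sub_zero, zero_add]
  have hA1 := toolA e a' b'
  rw [hsja', hsjb', hMa', hMb'] at hA1
  have hA2 := toolA (1-e) a' b'
  rw [hsjfa', hsjfb', hMa', hMb'] at hA2
  obtain ⟨U, hU⟩ : ∃ U, Φ (a'+b') - Φ a' - Φ b' = U := ⟨_, rfl⟩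
  rw [hU] at hA1 hA2
  have hU21 : U*e - (e*U)*e = 0 := by
    rw [← hU]; exact C1 h1 h2 Φ M hM tool0 toolB e he hse hsp a' b' heb' hb'e
  have hEq : M • starJordan e U = M • starJordan (1-e) U := by
    linear_combination (norm := abel) hA2 - hA1
  have hsj := aux_nsmul_cancel hM hEq
  rw [starJordan, starJordan, hse, hsf] at hsj
  have h6 : (e*U + U*e - U) + (e*U + U*e - U) = 0 := by
    rw [sub_mul, one_mul, mul_sub, mul_one] at hsj
    linear_combination (norm := abel) hsj
  have hU0 := aux_twice h6
  have h12 := congrArg (fun w => e*w) hU0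
  simp only [mul_add, mul_sub, mul_zero] at h12
  rw [d_ee h1 h2 e he U, d_flex h1 h2 e U] at h12
  have h13 : (e*U)*e = 0 := by linear_combination (norm := abel) h12
  have hUe0 : U*e = 0 := by linear_combination (norm := abel) hU21 + h13
  have heU : e*U = U := by linear_combination (norm := abel) hU0 - hUe0
  have hsjeU : starJordan e U = U := by rw [starJordan, hse, heU, hUe0, add_zero]
  rw [hsjeU] at hA1
  have hTT : Φ (a+b) - Φ a - Φ b = M • U := by linear_combination (norm := abel) hA1
  have heTT : e*(Φ (a+b) - Φ a - Φ b) = Φ (a+b) - Φ a - Φ b := by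
    rw [hTT, pm_left, heU]
  have hTTe : (Φ (a+b) - Φ a - Φ b)*e = 0 := by rw [hTT, pm_right, hUe0, smul_zero]
  -- the hermitian element h0 = b + b*
  obtain ⟨h0, hh0⟩ : ∃ h0, b + star b = h0 := ⟨_, rfl⟩
  have hsh : star h0 = h0 := by rw [← hh0, star_add, star_star, add_comm]
  have hg0 : starJordan h0 (e - (1-e)) = 0 := by
    rw [starJordan, hsh, ← hh0]
    simp only [mul_sub, sub_mul, mul_one, one_mul, add_mul, mul_add, hbe, hsb1, heb, hesb]
    abel
  have hZg := vanishB Φ M hM tool0 toolB a h0 (e - (1-e)) hg0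
  obtain ⟨Z, hZ⟩ : ∃ Z, Φ (a+h0) - Φ a - Φ h0 = Z := ⟨_, rfl⟩
  rw [hZ] at hZg
  have hZ21 : Z*e - (e*Z)*e = 0 := by
    have hx := C1 h1 h2 Φ M hM tool0 toolB e he hse hsp h0 a hea hae
    have hcomm : Φ (h0+a) - Φ h0 - Φ a = Z := by rw [← hZ, add_comm h0 a]; abel
    rwa [hcomm] at hx
  have hEZ : Z*e + Z*e - Z + (e*(star Z) + e*(star Z) - star Z) = 0 := by
    rw [starJordan] at hZg
    simp only [mul_sub, sub_mul, mul_one, one_mul] at hZg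
    linear_combination (norm := abel) hZg
  have hstar1 : e*(star Z) = star (Z*e) := by rw [star_mul, hse]
  have hstar2 : (e*(star Z))*e = star (e*(Z*e)) := by rw [star_mul, hse, ← hstar1]
  have hX0 : e*(star Z) - (e*(star Z))*e = 0 := by
    rw [hstar2, hstar1, ← star_sub, d_flex h1 h2 e Z, hZ21, star_zero]
  have hEZ1 := congrArg (fun w => e*w) hEZ
  simp only [mul_add, mul_sub, mul_zero] at hEZ1
  rw [d_flex h1 h2 e Z, d_ee h1 h2 e he (star Z)] at hEZ1
  have hEZ2 := congrArg (fun w => w*e) hEZ1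
  simp only [add_mul, sub_mul, zero_mul] at hEZ2
  rw [d_11ee h1 h2 e he Z] at hEZ2
  have hZ12 : e*Z - (e*Z)*e = 0 := by
    linear_combination (norm := abel) -hEZ1 + hEZ2 + hX0
  -- C1 at 1-e
  have hfb1 : (1-e)*(star b) = star b := by rw [sub_mul, one_mul, hesb, sub_zero]
  have hfb2 : (star b)*(1-e) = 0 := by rw [mul_sub, mul_one, hsb1, sub_self]
  have hS2 := C1 h1 h2 Φ M hM tool0 toolB (1-e) hf hsf hcl (a+b) (star b) hfb1 hfb2
  have hS1 := C1 h1 h2 Φ M hM tool0 toolB (1-e) hf hsf hcl b (star b) hfb1 hfb2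
  obtain ⟨S1, hS1d⟩ : ∃ S1, Φ (b + star b) - Φ b - Φ (star b) = S1 := ⟨_, rfl⟩
  obtain ⟨S2, hS2d⟩ : ∃ S2, Φ ((a+b) + star b) - Φ (a+b) - Φ (star b) = S2 := ⟨_, rfl⟩
  rw [hS2d] at hS2
  rw [hS1d] at hS1
  have hassoc : (a+b) + star b = a + h0 := by rw [← hh0, add_assoc]
  have hCo : (Φ (a+b) - Φ a - Φ b) = Z + S1 - S2 := by
    rw [← hZ, ← hS1d, ← hS2d, hassoc, ← hh0]
    abel
  have hTTf1 : (Φ (a+b) - Φ a - Φ b)*(1-e) = Φ (a+b) - Φ a - Φ b := by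
    rw [mul_sub, mul_one, hTTe, sub_zero]
  have hTTf2 : (1-e)*(Φ (a+b) - Φ a - Φ b) = 0 := by
    rw [sub_mul, one_mul, heTT, sub_self]
  have hZopf : Z*(1-e) - ((1-e)*Z)*(1-e) = 0 := by
    simp only [mul_sub, sub_mul, mul_one, one_mul]
    linear_combination (norm := abel) hZ12
  have hfinal : Φ (a+b) - Φ a - Φ b = 0 := by
    have hstep : Φ (a+b) - Φ a - Φ b
        = (Z + S1 - S2)*(1-e) - ((1-e)*(Z + S1 - S2))*(1-e) := by
      conv_lhs => rw [show Φ (a+b) - Φ a - Φ b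
        = (Φ (a+b) - Φ a - Φ b)*(1-e) - ((1-e)*(Φ (a+b) - Φ a - Φ b))*(1-e) from by
          rw [hTTf1, hTTf2, zero_mul, sub_zero]]
      rw [hCo]
    rw [hstep]
    have hexp : (Z + S1 - S2)*(1-e) - ((1-e)*(Z + S1 - S2))*(1-e)
        = (Z*(1-e) - ((1-e)*Z)*(1-e)) + (S1*(1-e) - ((1-e)*S1)*(1-e))
          - (S2*(1-e) - ((1-e)*S2)*(1-e)) := by
      simp only [add_mul, sub_mul, mul_add, mul_sub]
      abel
    rw [hexp, hZopf, hS1, hS2]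
    simp
  linear_combination (norm := abel) hfinal

end Pair


theorem stmt_7 {A : Type*} [NonAssocRing A] [Module ℂ A]
    [SMulCommClass ℂ A A] [IsScalarTower ℂ A A] [StarRing A]
    (halt₁ : ∀ a b : A, a * a * b = a * (a * b))
    (halt₂ : ∀ a b : A, b * a * a = b * (a * a))
    (e : A) (heStar : star e = e) (heIdem : e * e = e) (he0 : e ≠ 0) (he1 : e ≠ 1)
    (hsp : ∀ x : A, (∀ r : A, x * r * e = 0) → x = 0)
    (hcl : ∀ x : A, (∀ r : A, x * r * (1 - e) = 0) → x = 0)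
    (n : ℕ) (hn : 2 ≤ n) (Φ : A → A)
    (hΦ : ∀ x y : A,
      Φ (leftStarJordan (List.ofFn (lastTwoFamily n x y))) =
        ∑ k : Fin n, leftStarJordan (List.ofFn
          (Function.update (lastTwoFamily n x y) k (Φ (lastTwoFamily n x y k))))) :
    ∀ i j : Fin 2, i ≠ j → ∀ a b : A, inPeirce e i j a → inPeirce e i j b →
      Φ (a + b) = Φ a + Φ b := by

  obtain ⟨m, rfl⟩ : ∃ m, n = m + 2 := ⟨n - 2, by omega⟩
  have key := key_formula m Φ hΦ
  have hM : 0 < 2^m := pow_pos (by norm_num) m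
  have tool0 := tool0_of_key Φ m _ key
  have toolA := toolA_of_key Φ m _ key
  have toolB := toolB_of_key Φ m _ key
  intro i j hij a b ha hb
  fin_cases i <;> fin_cases j
  · exact absurd rfl hij
  · -- (0,1)
    obtain ⟨ha1, ha2⟩ := ha
    obtain ⟨hb1, hb2⟩ := hb
    simp only [peirceIdem, if_pos, if_neg, Fin.isValue] at ha1 ha2 hb1 hb2
    norm_num at ha1 ha2 hb1 hb2
    have hae : a*e = 0 := by
      rw [mul_sub, mul_one] at ha2
      linear_combination (norm := abel) -ha2
    have hbe : b*e = 0 := by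
      rw [mul_sub, mul_one] at hb2
      linear_combination (norm := abel) -hb2
    exact pair_add halt₁ halt₂ Φ (2^m) hM tool0 toolA toolB e heIdem heStar hsp hcl
      a b ha1 hae hb1 hbe
  · -- (1,0)
    obtain ⟨ha1, ha2⟩ := ha
    obtain ⟨hb1, hb2⟩ := hb
    simp only [peirceIdem, if_pos, if_neg, Fin.isValue] at ha1 ha2 hb1 hb2
    norm_num at ha1 ha2 hb1 hb2
    have hf : (1-e)*(1-e) = 1-e := by
      rw [mul_sub, mul_one, sub_mul, one_mul, heIdem]; abel
    have hsf : star (1-e) = 1-e := by rw [star_sub, star_one, heStar]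
    have hsp' : ∀ x : A, (∀ r : A, x * r * (1-(1-e)) = 0) → x = 0 := by
      simpa [sub_sub_cancel] using hsp
    have hae : a*(1-e) = 0 := by rw [mul_sub, mul_one, ha2, sub_self]
    have hbe : b*(1-e) = 0 := by rw [mul_sub, mul_one, hb2, sub_self]
    exact pair_add halt₁ halt₂ Φ (2^m) hM tool0 toolA toolB (1-e) hf hsf hcl hsp'
      a b ha1 hae hb1 hbe
  · exact absurd rfl hij
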